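/- Fix α, r ∈ ℝ. For v > 0 with Δ(v) := (v/2 − α)² + 2vr > 0, let d₁(v) := ((v/2 − α) − √Δ(v))/v and d₂(v) := ((v/2 − α) + √Δ(v))/v. Then at every such v the function d₁ is differentiable with d₁′(v) = −2(α·d₁(v) − r)/(v²(d₂(v) − d₁(v))); moreover α·d₁(v) − r = (v/2)·d₁(v)(1 − d₁(v)), so that d₁′(v) has the same sign as d₁(v)(d₁(v) − 1): it is positive if d₁(v) < 0 or d₁(v) > 1, zero if d₁(v) ∈ {0,1}, and negative if 0 < d₁(v) < 1. -/

import Mathlib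

/-- The smaller root of the characteristic polynomial `P(d) = (v/2)d² + (α − v/2)d − r`,
viewed as a function of the squared volatility `v`. -/
noncomputable def dOne (α r v : ℝ) : ℝ :=
  ((v / 2 - α) - Real.sqrt ((v / 2 - α) ^ 2 + 2 * v * r)) / v

/-- The larger root of the characteristic polynomial `P(d) = (v/2)d² + (α − v/2)d − r`,
viewed as a function of the squared volatility `v`. -/
noncomputable def dTwo (α r v : ℝ) : ℝ :=
  ((v / 2 - α) + Real.sqrt ((v / 2 - α) ^ 2 + 2 * v * r)) / v

/-- Behaviour of the smaller root `d₁(v)` as a function of the squared volatility `v`: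
the derivative equals `−2(α d₁ − r)/(v²(d₂ − d₁))`, one has
`α d₁ − r = (v/2) d₁ (1 − d₁)`, and the sign of the derivative matches the sign of
`d₁(d₁ − 1)`. -/
theorem stmt_3 (α r v : ℝ) (hv : 0 < v)
    (hΔ : 0 < (v / 2 - α) ^ 2 + 2 * v * r) :
    HasDerivAt (dOne α r)
      (-2 * (α * dOne α r v - r) / (v ^ 2 * (dTwo α r v - dOne α r v))) v ∧
    α * dOne α r v - r = (v / 2) * dOne α r v * (1 - dOne α r v) ∧
    ((dOne α r v < 0 ∨ 1 < dOne α r v) →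
      0 < -2 * (α * dOne α r v - r) / (v ^ 2 * (dTwo α r v - dOne α r v))) ∧
    ((dOne α r v = 0 ∨ dOne α r v = 1) →
      -2 * (α * dOne α r v - r) / (v ^ 2 * (dTwo α r v - dOne α r v)) = 0) ∧
    ((0 < dOne α r v ∧ dOne α r v < 1) →
      -2 * (α * dOne α r v - r) / (v ^ 2 * (dTwo α r v - dOne α r v)) < 0) := by
  have hv' : v ≠ 0 := hv.ne'
  set s := Real.sqrt ((v / 2 - α) ^ 2 + 2 * v * r) with hs_def
  have hs_pos : 0 < s := Real.sqrt_pos.mpr hΔ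
  have hs_sq : s ^ 2 = (v / 2 - α) ^ 2 + 2 * v * r := Real.sq_sqrt hΔ.le
  have hd1 : dOne α r v = ((v / 2 - α) - s) / v := rfl
  have hd2 : dTwo α r v = ((v / 2 - α) + s) / v := rfl
  have hroot : α * dOne α r v - r = (v / 2) * dOne α r v * (1 - dOne α r v) := by
    rw [hd1]; field_simp; linear_combination 4 * hs_sq
  have hdiff : dTwo α r v - dOne α r v = 2 * s / v := by
    rw [hd1, hd2]; field_simp; ring
  have hdiffpos : 0 < dTwo α r v - dOne α r v := by
    rw [hdiff]; positivity
  have hdenpos : 0 < v ^ 2 * (dTwo α r v - dOne α r v) := by positivity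
  -- numerator rewrite
  have hnum : -2 * (α * dOne α r v - r) = v * (dOne α r v * (dOne α r v - 1)) := by
    rw [hroot]; ring
  refine ⟨?_, hroot, ?_, ?_, ?_⟩
  · -- derivative
    have hΔderiv : HasDerivAt (fun w => (w / 2 - α) ^ 2 + 2 * w * r)
        (2 * (v / 2 - α) * (1 / 2) + 2 * r) v := by
      have h1 : HasDerivAt (fun w : ℝ => w / 2 - α) (1 / 2) v := by
        simpa using ((hasDerivAt_id v).div_const 2).sub_const α
      have h2 := (h1.pow 2)
      have h3 : HasDerivAt (fun w : ℝ => 2 * w * r) (2 * r) v := by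
        have := (hasDerivAt_id v).const_mul 2
        simpa [mul_comm, mul_assoc] using (this.mul_const r)
      exact (h2.add h3).congr_deriv (by push_cast; ring)
    have hsqrt : HasDerivAt (fun w => Real.sqrt ((w / 2 - α) ^ 2 + 2 * w * r))
        (1 / (2 * s) * (2 * (v / 2 - α) * (1 / 2) + 2 * r)) v := by
      have := (Real.hasDerivAt_sqrt hΔ.ne').comp v hΔderiv
      exact this
    have hnumf : HasDerivAt (fun w => (w / 2 - α) - Real.sqrt ((w / 2 - α) ^ 2 + 2 * w * r))
        (1 / 2 - 1 / (2 * s) * (2 * (v / 2 - α) * (1 / 2) + 2 * r)) v := by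
      have h1 : HasDerivAt (fun w : ℝ => w / 2 - α) (1 / 2) v := by
        simpa using ((hasDerivAt_id v).div_const 2).sub_const α
      exact h1.sub hsqrt
    have hdiv : HasDerivAt (dOne α r)
        (((1 / 2 - 1 / (2 * s) * (2 * (v / 2 - α) * (1 / 2) + 2 * r)) * v -
          ((v / 2 - α) - s) * 1) / v ^ 2) v := by
      have := hnumf.div (hasDerivAt_id v) hv'
      exact this
    convert hdiv using 1
    rw [hnum, hdiff, hd1]
    field_simp
    linear_combination (-4) * hs_sq
  · rintro (h | h)
    · rw [hnum]
      apply div_pos _ hdenpos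
      have : 0 < dOne α r v * (dOne α r v - 1) := mul_pos_of_neg_of_neg h (by linarith)
      positivity
    · rw [hnum]
      apply div_pos _ hdenpos
      have : 0 < dOne α r v * (dOne α r v - 1) := mul_pos (by linarith) (by linarith)
      positivity
  · rintro (h | h) <;> rw [hnum, h] <;> norm_num
  · rintro ⟨h0, h1⟩
    rw [hnum]
    apply div_neg_of_neg_of_pos _ hdenpos
    have : dOne α r v * (dOne α r v - 1) < 0 := mul_neg_of_pos_of_neg h0 (by linarith)
    exact mul_neg_of_pos_of_neg hv this
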